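/- Let G = (V,E) be a static directed multigraph with labelled edges and nonnegative capacities ĉ(e,ℓ), let M = (m_{s,d}) be a demand matrix whose total demand M_tot = Σ_{s,d} m_{s,d} equals the total capacity Ĉ = Σ_{(e,ℓ) ∈ E} ĉ(e,ℓ) > 0, and let F be a legal flow on a finite set P of simple directed paths of G achieving throughput θ > 0 for M. Then θ · ARL(M,F) ≤ 1; in particular, if every path in P with positive flow between a pair with positive demand has length at least k, then θ ≤ 1/k. -/

import Mathlib

open scoped BigOperators

namespace StaticMG

attribute [local instance] Classical.propDecidable

/-- A directed edge. -/
abbrev Edge (V : Type*) := V × V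
/-- A labelled edge `(e,ℓ)` of a directed multigraph. -/
abbrev LEdge (V : Type*) := Edge V × ℕ
/-- A path: a list of labelled edges. -/
abbrev Path (V : Type*) := List (LEdge V)

variable {V : Type*}

/-- The vertex sequence of a list of directed edges. -/
def pathVerts (es : List (Edge V)) : List V :=
  match es with
  | [] => []
  | e :: _ => e.1 :: es.map Prod.snd

/-- A nonempty list of directed edges forming a directed path visiting pairwise
distinct vertices. -/
def IsSimpleEdgePath (es : List (Edge V)) : Prop :=
  es ≠ [] ∧ es.Chain' (fun e e' => e.2 = e'.1) ∧ (pathVerts es).Nodup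

/-- `es` is a path from `s` to `d`. -/
def EndpointsOf (es : List (Edge V)) (s d : V) : Prop :=
  es.head?.map Prod.fst = some s ∧ es.getLast?.map Prod.snd = some d

/-- The `s`–`d` paths `P_{s,d}` of a finite path set `P`. -/
noncomputable def PathsSD (P : Finset (Path V)) (s d : V) : Finset (Path V) :=
  P.filter fun q => EndpointsOf (q.map Prod.fst) s d

/-- `r_p = F(p)/Σ_{p' ∈ P_{s,d}} F(p')` (equal to `0` when the denominator is `0`,
which is automatic here since then `F p = 0` for any `p ∈ P_{s,d}` with `F` nonnegative). -/
noncomputable def rP (P : Finset (Path V)) (F : Path V → ℝ) (s d : V) (p : Path V) : ℝ :=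
  F p / ∑ q ∈ PathsSD P s d, F q

/-- Total demand `M_tot = Σ_{s,d} m_{s,d}`. -/
noncomputable def Mtot [Fintype V] (m : V → V → ℝ) : ℝ :=
  ∑ s : V, ∑ d : V, m s d

/-- Average route length
`ARL(M,F) = Σ_{s,d} Σ_{p ∈ P_{s,d}} (m_{s,d}/M_tot)·r_p·len(p)`. -/
noncomputable def ARL [Fintype V] (P : Finset (Path V)) (F : Path V → ℝ)
    (m : V → V → ℝ) : ℝ :=
  ∑ s : V, ∑ d : V, ∑ p ∈ PathsSD P s d,
    (m s d / Mtot m) * rP P F s d p * (p.length : ℝ)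

lemma map_fst_prefix_pathVerts (es : List (Edge V))
    (h : es.Chain' (fun e e' => e.2 = e'.1)) :
    es.map Prod.fst <+: pathVerts es := by
  induction es with
  | nil => simp [pathVerts]
  | cons e rest ih =>
    match rest, h with
    | [], _ => simp [pathVerts]
    | e' :: rest', h =>
      rw [List.Chain', List.isChain_cons_cons] at h
      have ih' := ih h.2
      have hpv : pathVerts (e' :: rest') = e.2 :: (e' :: rest').map Prod.snd := by
        simp [pathVerts, h.1]
      rw [hpv] at ih'
      simp only [pathVerts, List.map_cons]
      rw [List.cons_prefix_cons]
      exact ⟨rfl, ih'⟩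

lemma nodup_of_simple (p : Path V) (h : IsSimpleEdgePath (p.map Prod.fst)) : p.Nodup := by
  obtain ⟨-, hch, hnd⟩ := h
  have hpre := map_fst_prefix_pathVerts (p.map Prod.fst) hch
  have h1 : ((p.map Prod.fst).map Prod.fst).Nodup := hnd.sublist hpre.sublist
  exact (h1.of_map _).of_map _

/-- throughput–average-route-length tradeoff for saturated demand.
If additionally the total demand equals the total capacity `Ĉ > 0`, then
`θ · ARL(M,F) ≤ 1`; in particular, if every path of `P` carrying positive flow between
a pair with positive demand has length at least `k ≥ 1`, then `θ ≤ 1/k`. -/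
theorem statement6 {V : Type*} [Fintype V] [DecidableEq V]
    (E : Finset (LEdge V)) (chat : LEdge V → ℝ) (hchat : ∀ le ∈ E, 0 ≤ chat le)
    (P : Finset (Path V))
    (hP : ∀ p ∈ P, (∀ x ∈ p, x ∈ E) ∧ IsSimpleEdgePath (p.map Prod.fst))
    (m : V → V → ℝ) (hm : ∀ s d, 0 ≤ m s d)
    (hMC : Mtot m = ∑ le ∈ E, chat le) (hCpos : 0 < ∑ le ∈ E, chat le)
    (F : Path V → ℝ) (hF : ∀ p ∈ P, 0 ≤ F p)
    (hleg : ∀ le ∈ E, ∑ p ∈ P.filter (fun p => le ∈ p), F p ≤ chat le)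
    (θ : ℝ) (hθ : 0 < θ)
    (hth : ∀ s d : V, θ * m s d ≤ ∑ p ∈ PathsSD P s d, F p) :
    θ * ARL P F m ≤ 1 ∧
      ∀ k : ℕ, 0 < k →
        (∀ s d : V, 0 < m s d → ∀ p ∈ PathsSD P s d, 0 < F p → k ≤ p.length) →
        θ ≤ 1 / (k : ℝ) := by
  have hMpos : 0 < Mtot m := hMC ▸ hCpos
  have hnodup : ∀ p ∈ P, p.Nodup := fun p hp => nodup_of_simple p (hP p hp).2
  have hsub : ∀ s d, PathsSD P s d ⊆ P := fun s d => Finset.filter_subset _ _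
  have hDnn : ∀ s d, (0:ℝ) ≤ ∑ q ∈ PathsSD P s d, F q := fun s d =>
    Finset.sum_nonneg fun q hq => hF q (hsub s d hq)
  -- termwise bound
  have hterm : ∀ s d, ∀ p ∈ PathsSD P s d,
      θ * ((m s d / Mtot m) * rP P F s d p * (p.length : ℝ)) ≤ F p * p.length / Mtot m := by
    intro s d p hp
    have hFp : 0 ≤ F p := hF p (hsub s d hp)
    have hkey : θ * m s d * rP P F s d p ≤ F p := by
      rcases eq_or_lt_of_le (hDnn s d) with hD0 | hDpos
      · have hF0 : F p = 0 :=
          (Finset.sum_eq_zero_iff_of_nonneg (fun q hq => hF q (hsub s d hq))).mp hD0.symm p hp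
        simp [rP, hF0]
      · have h1 : θ * m s d ≤ ∑ q ∈ PathsSD P s d, F q := hth s d
        calc θ * m s d * rP P F s d p
            ≤ (∑ q ∈ PathsSD P s d, F q) * rP P F s d p :=
              mul_le_mul_of_nonneg_right h1 (div_nonneg hFp hDpos.le)
          _ = F p := by rw [rP]; field_simp
    have hlen : (0:ℝ) ≤ (p.length : ℝ) / Mtot m := by positivity
    calc θ * ((m s d / Mtot m) * rP P F s d p * (p.length:ℝ))
        = (θ * m s d * rP P F s d p) * ((p.length:ℝ) / Mtot m) := by ring
      _ ≤ F p * ((p.length:ℝ) / Mtot m) := mul_le_mul_of_nonneg_right hkey hlen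
      _ = F p * p.length / Mtot m := by ring
  -- collapse the (s,d) double sum
  have hS2 : ∑ s : V, ∑ d : V, ∑ p ∈ PathsSD P s d, F p * (p.length:ℝ)
      ≤ ∑ p ∈ P, F p * (p.length:ℝ) := by
    have hrw : ∀ s d : V, ∑ p ∈ PathsSD P s d, F p * (p.length:ℝ)
        = ∑ p ∈ P, if EndpointsOf (p.map Prod.fst) s d then F p * (p.length:ℝ) else 0 :=
      fun s d => Finset.sum_filter _ _
    simp_rw [hrw]
    have hswap : ∑ s : V, ∑ d : V, ∑ p ∈ P,
          (if EndpointsOf (p.map Prod.fst) s d then F p * (p.length:ℝ) else 0)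
        = ∑ p ∈ P, ∑ s : V, ∑ d : V,
          (if EndpointsOf (p.map Prod.fst) s d then F p * (p.length:ℝ) else 0) := by
      calc ∑ s : V, ∑ d : V, ∑ p ∈ P,
            (if EndpointsOf (p.map Prod.fst) s d then F p * (p.length:ℝ) else 0)
          = ∑ s : V, ∑ p ∈ P, ∑ d : V,
            (if EndpointsOf (p.map Prod.fst) s d then F p * (p.length:ℝ) else 0) :=
            Finset.sum_congr rfl fun s _ => Finset.sum_comm
        _ = ∑ p ∈ P, ∑ s : V, ∑ d : V,
            (if EndpointsOf (p.map Prod.fst) s d then F p * (p.length:ℝ) else 0) :=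
            Finset.sum_comm
    rw [hswap]
    apply Finset.sum_le_sum
    intro p hp
    have hfl : (0:ℝ) ≤ F p * (p.length:ℝ) := mul_nonneg (hF p hp) (by positivity)
    by_cases hE : ∃ s d, EndpointsOf (p.map Prod.fst) s d
    · obtain ⟨s0, d0, h0⟩ := hE
      have huniq : ∀ s d : V, EndpointsOf (p.map Prod.fst) s d ↔ (s = s0 ∧ d = d0) := by
        intro s d
        constructor
        · rintro ⟨h1, h2⟩
          obtain ⟨h3, h4⟩ := h0
          exact ⟨Option.some.inj (h1.symm.trans h3), Option.some.inj (h2.symm.trans h4)⟩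
        · rintro ⟨rfl, rfl⟩; exact h0
      simp_rw [huniq, ite_and]
      simp
    · push_neg at hE
      simp [hE]
      exact hfl
  -- capacity bound
  have hS3 : ∑ p ∈ P, F p * (p.length:ℝ) ≤ ∑ le ∈ E, chat le := by
    have hlen : ∀ p ∈ P, (p.length : ℝ) = ∑ le ∈ E, (if le ∈ p then (1:ℝ) else 0) := by
      intro p hp
      have h1 : E.filter (fun le => le ∈ p) = p.toFinset := by
        ext le
        simp only [Finset.mem_filter, List.mem_toFinset]
        exact ⟨fun h => h.2, fun h => ⟨(hP p hp).1 le h, h⟩⟩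
      rw [Finset.sum_boole, h1, List.toFinset_card_of_nodup (hnodup p hp)]
    calc ∑ p ∈ P, F p * (p.length:ℝ)
        = ∑ p ∈ P, ∑ le ∈ E, (if le ∈ p then F p else 0) := by
          refine Finset.sum_congr rfl fun p hp => ?_
          rw [hlen p hp, Finset.mul_sum]
          refine Finset.sum_congr rfl fun le _ => ?_
          split <;> simp
      _ = ∑ le ∈ E, ∑ p ∈ P, (if le ∈ p then F p else 0) := Finset.sum_comm
      _ = ∑ le ∈ E, ∑ p ∈ P.filter (fun p => le ∈ p), F p := by
          exact Finset.sum_congr rfl fun le _ => (Finset.sum_filter _ _).symm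
      _ ≤ ∑ le ∈ E, chat le := Finset.sum_le_sum fun le hle => hleg le hle
  have hARL : θ * ARL P F m ≤ 1 := by
    have h1 : θ * ARL P F m
        ≤ (∑ s : V, ∑ d : V, ∑ p ∈ PathsSD P s d, F p * (p.length:ℝ)) / Mtot m := by
      rw [ARL, Finset.mul_sum, Finset.sum_div]
      refine Finset.sum_le_sum fun s _ => ?_
      rw [Finset.mul_sum, Finset.sum_div]
      refine Finset.sum_le_sum fun d _ => ?_
      rw [Finset.mul_sum, Finset.sum_div]
      exact Finset.sum_le_sum fun p hp => hterm s d p hp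
    have h2 : (∑ s : V, ∑ d : V, ∑ p ∈ PathsSD P s d, F p * (p.length:ℝ)) / Mtot m
        ≤ (∑ le ∈ E, chat le) / Mtot m := by
      exact (div_le_div_iff_of_pos_right hMpos).mpr (hS2.trans hS3)
    have h3 : (∑ le ∈ E, chat le) / Mtot m = 1 := by
      rw [hMC]; exact div_self hCpos.ne'
    linarith
  refine ⟨hARL, ?_⟩
  intro k hk hkl
  have hARLk : (k : ℝ) ≤ ARL P F m := by
    have hinner : ∀ s d : V, (m s d / Mtot m) * (k:ℝ)
        ≤ ∑ p ∈ PathsSD P s d, (m s d / Mtot m) * rP P F s d p * (p.length:ℝ) := by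
      intro s d
      rcases eq_or_lt_of_le (hm s d) with hm0 | hmpos
      · rw [← hm0]
        simp only [zero_div, zero_mul]
        exact Finset.sum_nonneg fun p hp => le_of_eq (by ring)
      · have hDpos : 0 < ∑ q ∈ PathsSD P s d, F q :=
          lt_of_lt_of_le (by positivity) (hth s d)
        have hrsum : ∑ p ∈ PathsSD P s d, rP P F s d p = 1 := by
          simp only [rP]
          rw [← Finset.sum_div, div_self hDpos.ne']
        have hstep : ∀ p ∈ PathsSD P s d,
            rP P F s d p * (k:ℝ) ≤ rP P F s d p * (p.length:ℝ) := by
          intro p hp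
          have hrnn : (0:ℝ) ≤ rP P F s d p := div_nonneg (hF p (hsub s d hp)) hDpos.le
          rcases eq_or_lt_of_le hrnn with h0 | hpos
          · rw [← h0]; simp
          · have hFpos : 0 < F p := by
              have h5 := mul_pos hpos hDpos
              simp only [rP] at h5
              rwa [div_mul_cancel₀ _ hDpos.ne'] at h5
            have hklen := hkl s d hmpos p hp hFpos
            exact mul_le_mul_of_nonneg_left (by exact_mod_cast hklen) hpos.le
        have h3 : ∑ p ∈ PathsSD P s d, (m s d / Mtot m) * (rP P F s d p * (k:ℝ))
            ≤ ∑ p ∈ PathsSD P s d, (m s d / Mtot m) * rP P F s d p * (p.length:ℝ) := by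
          refine Finset.sum_le_sum fun p hp => ?_
          have hmM : (0:ℝ) ≤ m s d / Mtot m := div_nonneg (hm s d) hMpos.le
          calc (m s d / Mtot m) * (rP P F s d p * (k:ℝ))
              ≤ (m s d / Mtot m) * (rP P F s d p * (p.length:ℝ)) :=
                mul_le_mul_of_nonneg_left (hstep p hp) hmM
            _ = (m s d / Mtot m) * rP P F s d p * (p.length:ℝ) := by ring
        have h4 : ∑ p ∈ PathsSD P s d, (m s d / Mtot m) * (rP P F s d p * (k:ℝ))
            = (m s d / Mtot m) * (k:ℝ) := by
          rw [← Finset.mul_sum, ← Finset.sum_mul, hrsum, one_mul]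
        linarith
    have hsum : ∑ s : V, ∑ d : V, (m s d / Mtot m) * (k:ℝ) = (k:ℝ) := by
      calc ∑ s : V, ∑ d : V, (m s d / Mtot m) * (k:ℝ)
          = (∑ s : V, ∑ d : V, m s d) / Mtot m * (k:ℝ) := by
            rw [Finset.sum_div, Finset.sum_mul]
            refine Finset.sum_congr rfl fun s _ => ?_
            rw [Finset.sum_div, Finset.sum_mul]
        _ = (k:ℝ) := by rw [← Mtot, div_self hMpos.ne', one_mul]
    calc (k:ℝ) = ∑ s : V, ∑ d : V, (m s d / Mtot m) * (k:ℝ) := hsum.symm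
      _ ≤ ARL P F m := by
        rw [ARL]
        exact Finset.sum_le_sum fun s _ => Finset.sum_le_sum fun d _ => hinner s d
  have hkpos : (0:ℝ) < (k:ℝ) := by exact_mod_cast hk
  rw [le_div_iff₀ hkpos]
  have := mul_le_mul_of_nonneg_left hARLk hθ.le
  linarith


end StaticMG
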